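/- For every integer n ≥ 8, the product of all primes p ≤ n satisfies ∏_{p ≤ n} p < 4^n/√(54·(n+1)^3). -/

import Mathlib

open Finset Nat

lemma choose_sq_bound : ∀ m : ℕ, 9 ≤ m → 8 * (Nat.choose (2 * m + 1) m) ^ 2 ≤ 16 ^ m := by
  intro m hm
  induction m with
  | zero => omega
  | succ m ih =>
    rcases Nat.lt_or_ge m 9 with h | h
    · have hm8 : m = 8 := by omega
      subst hm8; decide
    · have ihm := ih h
      set c := Nat.choose (2 * m + 1) m with hc
      set c' := Nat.choose (2 * (m + 1) + 1) (m + 1) with hc'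
      have h1 : (2 * m + 2) * c = Nat.choose (2 * m + 2) (m + 1) * (m + 1) := by
        have := Nat.add_one_mul_choose_eq (2 * m + 1) m
        simpa [Nat.succ_eq_add_one] using this
      have h2 : (2 * m + 3) * Nat.choose (2 * m + 2) (m + 1) =
          Nat.choose (2 * m + 3) (m + 2) * (m + 2) := by
        have := Nat.add_one_mul_choose_eq (2 * m + 2) (m + 1)
        simpa [Nat.succ_eq_add_one] using this
      have h3 : Nat.choose (2 * m + 3) (m + 2) = c' := by
        rw [hc']
        have e : 2 * (m + 1) + 1 = 2 * m + 3 := by ring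
        rw [e, ← Nat.choose_symm (by omega : m + 2 ≤ 2 * m + 3)]
        congr 1
        omega
      have key : (m + 1) * (m + 2) * c' = (2 * m + 2) * (2 * m + 3) * c := by
        rw [← h3]
        nlinarith [h1, h2]
      have hpos : 0 < (m + 1) * (m + 2) := by positivity
      have goal_mul : 8 * c' ^ 2 * ((m + 1) * (m + 2)) ^ 2 ≤ 16 ^ (m + 1) * ((m + 1) * (m + 2)) ^ 2 := by
        have e : 8 * c' ^ 2 * ((m + 1) * (m + 2)) ^ 2 = 8 * ((2 * m + 2) * (2 * m + 3) * c) ^ 2 := by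
          rw [← key]; ring
        rw [e]
        have hle : (2 * m + 2) * (2 * m + 3) ≤ 4 * ((m + 1) * (m + 2)) := by nlinarith
        calc 8 * ((2 * m + 2) * (2 * m + 3) * c) ^ 2
            = (8 * c ^ 2) * ((2 * m + 2) * (2 * m + 3)) ^ 2 := by ring
          _ ≤ 16 ^ m * (4 * ((m + 1) * (m + 2))) ^ 2 := by
              exact Nat.mul_le_mul ihm (Nat.pow_le_pow_left hle 2)
          _ = 16 ^ (m + 1) * ((m + 1) * (m + 2)) ^ 2 := by ring
      exact Nat.le_of_mul_le_mul_right goal_mul (by positivity)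

lemma primorial_sq_bound : ∀ n : ℕ, 8 ≤ n → (primorial n) ^ 2 * (54 * (n + 1) ^ 3) < 16 ^ n := by
  intro n
  induction n using Nat.strong_induction_on with
  | _ n ih =>
    intro hn
    rcases Nat.lt_or_ge n 19 with h | h
    · interval_cases n <;> decide
    · rcases n.even_or_odd with ⟨m, hm⟩ | ⟨m, hm⟩
      · -- n even, n = m + m with m ≥ 10; n - 1 odd
        have hn1 : n = (n - 1) + 1 := by omega
        have hodd : Odd (n - 1) := by
          refine ⟨m - 1, by omega⟩
        have hps : primorial n = primorial (n - 1) := by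
          rw [hn1]; exact primorial_succ (by omega) hodd
        have ihn := ih (n - 1) (by omega) (by omega)
        rw [hps]
        have hcube : (n + 1) ^ 3 ≤ 16 * ((n - 1) + 1) ^ 3 := by
          have h1 : n + 1 ≤ 2 * ((n - 1) + 1) := by omega
          calc (n + 1) ^ 3 ≤ (2 * ((n - 1) + 1)) ^ 3 := Nat.pow_le_pow_left h1 3
            _ = 8 * ((n - 1) + 1) ^ 3 := by ring
            _ ≤ 16 * ((n - 1) + 1) ^ 3 := Nat.mul_le_mul (by norm_num) le_rfl
        calc (primorial (n - 1)) ^ 2 * (54 * (n + 1) ^ 3)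
            ≤ (primorial (n - 1)) ^ 2 * (54 * (16 * ((n - 1) + 1) ^ 3)) := by
              exact Nat.mul_le_mul_left _ (Nat.mul_le_mul_left _ hcube)
          _ = ((primorial (n - 1)) ^ 2 * (54 * ((n - 1) + 1) ^ 3)) * 16 := by ring
          _ < 16 ^ (n - 1) * 16 := by
              exact (Nat.mul_lt_mul_right (by norm_num)).mpr ihn
          _ = 16 ^ ((n - 1) + 1) := by ring
          _ = 16 ^ n := by rw [← hn1]
      · -- n odd, n = 2m + 1 with m ≥ 9
        have hm9 : 9 ≤ m := by omega
        have hprim : primorial n ≤ primorial (m + 1) * Nat.choose (2 * m + 1) (m + 1) := by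
          have := primorial_add_le (m := m + 1) (n := m) (Nat.le_succ m)
          have e : m + 1 + m = n := by omega
          rw [e] at this
          have e2 : Nat.choose n (m + 1) = Nat.choose (2 * m + 1) (m + 1) := by
            rw [hm]
          rwa [e2] at this
        have hcsym : Nat.choose (2 * m + 1) (m + 1) = Nat.choose (2 * m + 1) m := by
          rw [← Nat.choose_symm (by omega : m + 1 ≤ 2 * m + 1)]
          congr 1
          omega
        rw [hcsym] at hprim
        set Q := primorial (m + 1)
        set c := Nat.choose (2 * m + 1) m
        have ihQ : Q ^ 2 * (54 * (m + 2) ^ 3) < 16 ^ (m + 1) := by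
          have := ih (m + 1) (by omega) (by omega)
          simpa using this
        have hcb : 8 * c ^ 2 ≤ 16 ^ m := choose_sq_bound m hm9
        have hcpos : 0 < c := Nat.choose_pos (by omega)
        calc (primorial n) ^ 2 * (54 * (n + 1) ^ 3)
            ≤ (Q * c) ^ 2 * (54 * (n + 1) ^ 3) := by
              exact Nat.mul_le_mul_right _ (Nat.pow_le_pow_left hprim 2)
          _ = (Q ^ 2 * (54 * (m + 1) ^ 3)) * (8 * c ^ 2) := by
              rw [hm]; ring
          _ ≤ (Q ^ 2 * (54 * (m + 2) ^ 3)) * (8 * c ^ 2) := by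
              have : (m + 1) ^ 3 ≤ (m + 2) ^ 3 := Nat.pow_le_pow_left (by omega) 3
              exact Nat.mul_le_mul_right _ (Nat.mul_le_mul_left _ (Nat.mul_le_mul_left _ this))
          _ < 16 ^ (m + 1) * (8 * c ^ 2) := by
              exact (Nat.mul_lt_mul_right (by positivity)).mpr ihQ
          _ ≤ 16 ^ (m + 1) * 16 ^ m := Nat.mul_le_mul_left _ hcb
          _ = 16 ^ n := by rw [hm, ← pow_add]; congr 1; ring
  
theorem stmt_12 (n : ℕ) (hn : 8 ≤ n) :
    ((∏ p ∈ (Finset.range (n + 1)).filter Nat.Prime, p : ℕ) : ℝ) <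
      4 ^ n / Real.sqrt (54 * (n + 1) ^ 3) := by
  have hnat := primorial_sq_bound n hn
  set N := primorial n with hN
  have hEq : (∏ p ∈ (Finset.range (n + 1)).filter Nat.Prime, p : ℕ) = N := rfl
  rw [hEq]
  have hX : (0:ℝ) < 54 * ((n:ℝ) + 1) ^ 3 := by positivity
  have hs : (0:ℝ) < Real.sqrt (54 * (n + 1) ^ 3) := by
    apply Real.sqrt_pos.mpr; push_cast; positivity
  rw [lt_div_iff₀ hs]
  have hsq : ((N:ℝ) * Real.sqrt (54 * (n + 1) ^ 3)) ^ 2 < ((4:ℝ) ^ n) ^ 2 := by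
    have hs2 : (Real.sqrt (54 * ((n:ℝ) + 1) ^ 3)) ^ 2 = 54 * ((n:ℝ) + 1) ^ 3 :=
      Real.sq_sqrt hX.le
    have hc : ((N:ℝ) ^ 2 * (54 * ((n:ℝ) + 1) ^ 3)) < 16 ^ n := by
      have := hnat
      have : ((N ^ 2 * (54 * (n + 1) ^ 3) : ℕ) : ℝ) < ((16 ^ n : ℕ) : ℝ) := by
        exact_mod_cast hnat
      push_cast at this
      convert this using 2 <;> push_cast <;> ring
    calc ((N:ℝ) * Real.sqrt (54 * (n + 1) ^ 3)) ^ 2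
        = (N:ℝ) ^ 2 * (Real.sqrt (54 * ((n:ℝ) + 1) ^ 3)) ^ 2 := by push_cast; ring
      _ = (N:ℝ) ^ 2 * (54 * ((n:ℝ) + 1) ^ 3) := by rw [hs2]
      _ < 16 ^ n := hc
      _ = ((4:ℝ) ^ n) ^ 2 := by rw [← pow_mul, pow_mul']; norm_num
  exact lt_of_pow_lt_pow_left₀ 2 (by positivity) hsq
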